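/- For every α ≥ 0 and every n, if A = uuᵀ and B = vvᵀ with u,v ∈ [0,∞)ⁿ and A - B positive semidefinite, then the matrix with entries A_{ij}^α - B_{ij}^α is positive semidefinite. -/

import Mathlib

open Matrix

private lemma quadform (n : ℕ) (w x : Fin n → ℝ) :
    x ⬝ᵥ (vecMulVec w w *ᵥ x) = (w ⬝ᵥ x) ^ 2 := by
  simp only [dotProduct, mulVec, vecMulVec_apply, sq, Finset.sum_mul, Finset.mul_sum,
    dotProduct]
  rw [Finset.sum_comm]
  congr 1; ext i; congr 1; ext j; ring

private lemma outer_psd (n : ℕ) (w : Fin n → ℝ) : (vecMulVec w w).PosSemidef := by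
  rw [posSemidef_iff_dotProduct_mulVec]
  constructor
  · ext i j
    simp [vecMulVec_apply, mul_comm, Matrix.IsHermitian]
  · intro x
    have := quadform n w x
    simp only [star_trivial] at *
    rw [this]
    positivity

private lemma smul_psd (n : ℕ) (a : ℝ) (ha : 0 ≤ a) (M : Matrix (Fin n) (Fin n) ℝ)
    (hM : M.PosSemidef) : (a • M).PosSemidef := by
  rw [posSemidef_iff_dotProduct_mulVec] at hM ⊢
  constructor
  · have h1 := hM.1
    unfold Matrix.IsHermitian at *
    rw [conjTranspose_smul, h1, star_trivial]
  · intro x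
    have := hM.2 x
    simp only [smul_mulVec, dotProduct_smul, smul_eq_mul, star_trivial] at *
    positivity

theorem stmt3 (n : ℕ) (α : ℝ) (hα : 0 ≤ α) (u v : Fin n → ℝ)
    (hu : ∀ i, 0 ≤ u i) (hv : ∀ i, 0 ≤ v i)
    (h : (Matrix.vecMulVec u u - Matrix.vecMulVec v v).PosSemidef) :
    (Matrix.of fun i j =>
      (if u i * u j = 0 then 0 else (u i * u j) ^ α) -
      (if v i * v j = 0 then 0 else (v i * v j) ^ α)).PosSemidef := by
  have key : ∀ x : Fin n → ℝ, (v ⬝ᵥ x) ^ 2 ≤ (u ⬝ᵥ x) ^ 2 := by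
    intro x
    have := h.dotProduct_mulVec_nonneg x
    simp only [star_trivial, sub_mulVec, dotProduct_sub] at this
    rw [quadform n u x, quadform n v x] at this
    linarith
  set w : Fin n → ℝ := fun i => if u i = 0 then 0 else u i ^ α with hw
  -- case v = 0
  by_cases hv0 : v = 0
  · have : (Matrix.of fun i j =>
      (if u i * u j = 0 then 0 else (u i * u j) ^ α) -
      (if v i * v j = 0 then 0 else (v i * v j) ^ α)) = vecMulVec w w := by
      ext i j
      simp only [of_apply, hv0, Pi.zero_apply, mul_zero, if_pos rfl, sub_zero,
        vecMulVec_apply, hw]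
      by_cases h1 : u i = 0
      · simp [h1]
      by_cases h2 : u j = 0
      · simp [h2]
      rw [if_neg (by exact mul_ne_zero h1 h2), if_neg h1, if_neg h2,
        Real.mul_rpow (hu i) (hu j)]
      norm_num
    rw [this]
    exact outer_psd n w
  -- u ≠ 0 since otherwise v = 0
  have hu0 : u ≠ 0 := by
    intro h0
    apply hv0
    funext i
    have := key (Pi.single i 1)
    simp [h0, dotProduct, Pi.single_apply] at this
    show v i = (0 : ℝ)
    exact this
  -- get c with v = c • u
  have huu : 0 < u ⬝ᵥ u := by
    rcases Function.ne_iff.mp hu0 with ⟨i, hi⟩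
    have : 0 < u i * u i := by
      have := hu i
      rcases lt_or_eq_of_le this with h' | h'
      · positivity
      · exact absurd h'.symm hi
    apply lt_of_lt_of_le this
    rw [dotProduct]
    exact Finset.single_le_sum (f := fun j => u j * u j)
      (fun j _ => mul_self_nonneg _) (Finset.mem_univ i)
  set c : ℝ := (v ⬝ᵥ u) / (u ⬝ᵥ u) with hc
  have hvc : v = c • u := by
    -- Cauchy–Schwarz equality via key
    set x : Fin n → ℝ := (u ⬝ᵥ u) • v - (v ⬝ᵥ u) • u with hx
    have hux : u ⬝ᵥ x = 0 := by
      simp only [hx, dotProduct_sub, dotProduct_smul, smul_eq_mul]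
      rw [dotProduct_comm u v]
      ring
    have hvx : v ⬝ᵥ x = 0 := by
      have := key x
      rw [hux] at this
      nlinarith [this, sq_nonneg (v ⬝ᵥ x)]
    have hxx : x ⬝ᵥ x = 0 := by
      have hcomm : u ⬝ᵥ v = v ⬝ᵥ u := dotProduct_comm u v
      simp only [hx, dotProduct_sub, sub_dotProduct, dotProduct_smul, smul_dotProduct,
        smul_eq_mul] at hvx hux ⊢
      linear_combination (u ⬝ᵥ u) * hvx - ((u ⬝ᵥ u) * (v ⬝ᵥ u)) * hcomm
    have hx0 : x = 0 := by
      funext i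
      have hs : ∑ j, x j * x j = 0 := hxx
      have := Finset.sum_eq_zero_iff_of_nonneg
        (fun j (_ : j ∈ Finset.univ) => mul_self_nonneg (x j)) |>.mp hs i (Finset.mem_univ i)
      exact mul_self_eq_zero.mp this
    funext i
    have : (u ⬝ᵥ u) * v i - (v ⬝ᵥ u) * u i = 0 := by
      have := congrFun hx0 i
      simpa [hx, sub_eq_zero] using this
    have h2 : v i = ((v ⬝ᵥ u) / (u ⬝ᵥ u)) * u i := by
      field_simp
      linarith
    simpa [hc] using h2
  have hc0 : 0 ≤ c := by
    apply div_nonneg _ (le_of_lt huu)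
    exact Finset.sum_nonneg fun i _ => mul_nonneg (hv i) (hu i)
  have hc1 : c ≤ 1 := by
    have := key u
    rw [hvc] at this
    simp only [smul_dotProduct, smul_eq_mul] at this
    have hs2 : 0 < (u ⬝ᵥ u) ^ 2 := by positivity
    have hsq : c ^ 2 ≤ 1 := by nlinarith [this, hs2]
    nlinarith [hsq, hc0]
  -- case c = 0 → v = 0, contradiction avoided: handle c = 0
  by_cases hcz : c = 0
  · exact absurd (by rw [hvc, hcz, zero_smul]) hv0
  have hcpos : 0 < c := lt_of_le_of_ne hc0 (Ne.symm hcz)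
  set t : ℝ := c ^ α with ht
  have ht0 : 0 ≤ t := Real.rpow_nonneg hc0 α
  have ht1 : t ≤ 1 := Real.rpow_le_one hc0 hc1 hα
  have heq : (Matrix.of fun i j =>
      (if u i * u j = 0 then 0 else (u i * u j) ^ α) -
      (if v i * v j = 0 then 0 else (v i * v j) ^ α))
      = (1 - t ^ 2) • vecMulVec w w := by
    ext i j
    simp only [of_apply, Matrix.smul_apply, vecMulVec_apply, smul_eq_mul, hw]
    have hvi : v i = c * u i := by rw [hvc]; rfl
    have hvj : v j = c * u j := by rw [hvc]; rfl
    by_cases h1 : u i = 0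
    · simp [h1, hvi]
    by_cases h2 : u j = 0
    · simp [h2, hvj]
    have hvij : v i * v j ≠ 0 := by
      rw [hvi, hvj]
      exact mul_ne_zero (mul_ne_zero hcz h1) (mul_ne_zero hcz h2)
    rw [if_neg (mul_ne_zero h1 h2), if_neg hvij, if_neg h1, if_neg h2]
    rw [hvi, hvj]
    have : c * u i * (c * u j) = (c * c) * (u i * u j) := by ring
    rw [this, Real.mul_rpow (mul_nonneg hc0 hc0) (mul_nonneg (hu i) (hu j)),
      Real.mul_rpow hc0 hc0, Real.mul_rpow (hu i) (hu j), ← ht]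
    ring
  rw [heq]
  exact smul_psd n _ (by nlinarith [ht0, ht1]) _ (outer_psd n w)
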